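/- arXiv:0910.3705 — 3 statements merged into one kernel-verified Lean document; each statement's English description precedes it below -/
import Mathlib

section
/- The resolvent average is strictly monotone: if Aᵢ ⪰ Bᵢ for all i and additionally A_j ≻ B_j (A_j − B_j positive definite) for some index j, then R_μ(A,λ) ≻ R_μ(B,λ). -/
open Matrix

section Aux

variable {N : ℕ}

lemma my_smul_posDef {M : Matrix (Fin N) (Fin N) ℝ} (hM : M.PosDef) {c : ℝ} (hc : 0 < c) :
    (c • M).PosDef := by
  refine Matrix.PosDef.of_dotProduct_mulVec_pos ?_ fun x hx => ?_
  · unfold Matrix.IsHermitian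
    rw [conjTranspose_smul, star_trivial, hM.1.eq]
  · rw [smul_mulVec, dotProduct_smul, smul_eq_mul]
    exact mul_pos hc (hM.dotProduct_mulVec_pos hx)

lemma my_smul_posSemidef {M : Matrix (Fin N) (Fin N) ℝ} (hM : M.PosSemidef) {c : ℝ} (hc : 0 ≤ c) :
    (c • M).PosSemidef := by
  refine Matrix.PosSemidef.of_dotProduct_mulVec_nonneg ?_ fun x => ?_
  · unfold Matrix.IsHermitian
    rw [conjTranspose_smul, star_trivial, hM.1.eq]
  · rw [smul_mulVec, dotProduct_smul, smul_eq_mul]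
    exact mul_nonneg hc (hM.dotProduct_mulVec_nonneg x)

lemma my_smul_one_posDef {c : ℝ} (hc : 0 < c) : (c • (1 : Matrix (Fin N) (Fin N) ℝ)).PosDef :=
  my_smul_posDef Matrix.PosDef.one hc

/-- conjugation by an invertible Hermitian matrix preserves PosDef. -/
lemma my_conj_posDef {C D : Matrix (Fin N) (Fin N) ℝ} (hD : D.PosDef) (hC : IsUnit C) :
    (Cᴴ * D * C).PosDef := by
  refine Matrix.PosDef.of_dotProduct_mulVec_pos (isHermitian_conjTranspose_mul_mul C hD.1) fun x hx => ?_
  have hinj : Function.Injective (C.mulVec) := mulVec_injective_iff_isUnit.mpr hC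
  have hCx : C *ᵥ x ≠ 0 := by
    intro h
    exact hx (hinj (by simpa using h))
  have := hD.dotProduct_mulVec_pos hCx
  simpa only [star_mulVec, dotProduct_mulVec, vecMul_vecMul, Matrix.mul_assoc] using this

/-- Strict antitonicity of inverse on PosDef matrices. -/
lemma my_inv_strict_antitone {X Y : Matrix (Fin N) (Fin N) ℝ}
    (hX : X.PosDef) (hY : Y.PosDef) (hXY : (X - Y).PosDef) :
    (Y⁻¹ - X⁻¹).PosDef := by
  have hXu := hX.isUnit
  have hYu := hY.isUnit
  have hX1 : X * X⁻¹ = 1 := mul_nonsing_inv _ (isUnit_iff_isUnit_det _ |>.1 hXu)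
  have hX2 : X⁻¹ * X = 1 := nonsing_inv_mul _ (isUnit_iff_isUnit_det _ |>.1 hXu)
  have hY1 : Y * Y⁻¹ = 1 := mul_nonsing_inv _ (isUnit_iff_isUnit_det _ |>.1 hYu)
  have hY2 : Y⁻¹ * Y = 1 := nonsing_inv_mul _ (isUnit_iff_isUnit_det _ |>.1 hYu)
  set D := X - Y with hD
  have key : Y⁻¹ - X⁻¹ = X⁻¹ * D * X⁻¹ + (D * X⁻¹)ᴴ * Y⁻¹ * (D * X⁻¹) := by
    have hDh : Dᴴ = D := hXY.1
    rw [conjTranspose_mul, hX.inv.1, hDh]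
    have h1 : X⁻¹ * D * Y⁻¹ = Y⁻¹ - X⁻¹ := by
      rw [hD, Matrix.mul_sub, Matrix.sub_mul, hX2, Matrix.mul_assoc, hY1,
        Matrix.mul_one, Matrix.one_mul]
    calc Y⁻¹ - X⁻¹ = X⁻¹ * D * Y⁻¹ := h1.symm
      _ = X⁻¹ * D * (Y⁻¹ * (Y + D) * X⁻¹) := by
          rw [hD, add_sub_cancel, Matrix.mul_assoc Y⁻¹ X X⁻¹, hX1, Matrix.mul_one]
      _ = X⁻¹ * D * X⁻¹ + X⁻¹ * (D * Y⁻¹ * D) * X⁻¹ := by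
          rw [Matrix.mul_add Y⁻¹, hY2]
          noncomm_ring
      _ = X⁻¹ * D * X⁻¹ + X⁻¹ * D * Y⁻¹ * (D * X⁻¹) := by noncomm_ring
  rw [key]
  refine Matrix.PosDef.add_posSemidef ?_ ?_
  · have := my_conj_posDef (C := X⁻¹) hXY hX.inv.isUnit
    rwa [hX.inv.1] at this
  · exact (hY.inv.posSemidef).conjTranspose_mul_mul_same _

/-- Non-strict antitonicity of inverse. -/
lemma my_inv_antitone {X Y : Matrix (Fin N) (Fin N) ℝ}
    (hX : X.PosDef) (hY : Y.PosDef) (hXY : (X - Y).PosSemidef) :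
    (Y⁻¹ - X⁻¹).PosSemidef := by
  have hXu := hX.isUnit
  have hYu := hY.isUnit
  have hX1 : X * X⁻¹ = 1 := mul_nonsing_inv _ (isUnit_iff_isUnit_det _ |>.1 hXu)
  have hX2 : X⁻¹ * X = 1 := nonsing_inv_mul _ (isUnit_iff_isUnit_det _ |>.1 hXu)
  have hY1 : Y * Y⁻¹ = 1 := mul_nonsing_inv _ (isUnit_iff_isUnit_det _ |>.1 hYu)
  have hY2 : Y⁻¹ * Y = 1 := nonsing_inv_mul _ (isUnit_iff_isUnit_det _ |>.1 hYu)
  set D := X - Y with hD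
  have key : Y⁻¹ - X⁻¹ = X⁻¹ * D * X⁻¹ + (D * X⁻¹)ᴴ * Y⁻¹ * (D * X⁻¹) := by
    have hDh : Dᴴ = D := hXY.1
    rw [conjTranspose_mul, hX.inv.1, hDh]
    have h1 : X⁻¹ * D * Y⁻¹ = Y⁻¹ - X⁻¹ := by
      rw [hD, Matrix.mul_sub, Matrix.sub_mul, hX2, Matrix.mul_assoc, hY1,
        Matrix.mul_one, Matrix.one_mul]
    calc Y⁻¹ - X⁻¹ = X⁻¹ * D * Y⁻¹ := h1.symm
      _ = X⁻¹ * D * (Y⁻¹ * (Y + D) * X⁻¹) := by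
          rw [hD, add_sub_cancel, Matrix.mul_assoc Y⁻¹ X X⁻¹, hX1, Matrix.mul_one]
      _ = X⁻¹ * D * X⁻¹ + X⁻¹ * (D * Y⁻¹ * D) * X⁻¹ := by
          rw [Matrix.mul_add Y⁻¹, hY2]
          noncomm_ring
      _ = X⁻¹ * D * X⁻¹ + X⁻¹ * D * Y⁻¹ * (D * X⁻¹) := by noncomm_ring
  rw [key]
  refine Matrix.PosSemidef.add ?_ ?_
  · have : (X⁻¹)ᴴ * D * X⁻¹ |>.PosSemidef := hXY.conjTranspose_mul_mul_same _
    rwa [hX.inv.1] at this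
  · exact (hY.inv.posSemidef).conjTranspose_mul_mul_same _

end Aux

lemma my_sum_posSemidef {N n : ℕ} (f : Fin n → Matrix (Fin N) (Fin N) ℝ)
    (s : Finset (Fin n)) (hf : ∀ i ∈ s, (f i).PosSemidef) :
    (∑ i ∈ s, f i).PosSemidef := by
  classical
  induction s using Finset.induction_on with
  | empty => simpa using Matrix.PosSemidef.zero
  | insert _ _ hns ih =>
    rw [Finset.sum_insert hns]
    exact (hf _ (Finset.mem_insert_self _ _)).add
      (ih fun i hi => hf i (Finset.mem_insert_of_mem hi))

theorem resolvent_average_strict_monotone (N n : ℕ)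
    (A B : Fin n → Matrix (Fin N) (Fin N) ℝ) (w : Fin n → ℝ) (μ : ℝ)
    (hA : ∀ i, (A i).PosSemidef) (hB : ∀ i, (B i).PosSemidef)
    (hAB : ∀ i, (A i - B i).PosSemidef)
    (j : Fin n) (hj : (A j - B j).PosDef)
    (hw : ∀ i, 0 < w i) (hw1 : ∑ i, w i = 1) (hμ : 0 < μ) :
    (((∑ i, w i • (A i + μ⁻¹ • 1)⁻¹)⁻¹ - μ⁻¹ • (1 : Matrix (Fin N) (Fin N) ℝ))
      - ((∑ i, w i • (B i + μ⁻¹ • 1)⁻¹)⁻¹ - μ⁻¹ • 1)).PosDef := by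
  classical
  have hc : (0 : ℝ) < μ⁻¹ := inv_pos.mpr hμ
  have hone : ((μ⁻¹ : ℝ) • (1 : Matrix (Fin N) (Fin N) ℝ)).PosDef := my_smul_one_posDef hc
  -- positive definiteness of the shifted matrices and their inverses
  have hXA : ∀ i, (A i + μ⁻¹ • 1 : Matrix (Fin N) (Fin N) ℝ).PosDef :=
    fun i => Matrix.PosDef.posSemidef_add (hA i) hone
  have hXB : ∀ i, (B i + μ⁻¹ • 1 : Matrix (Fin N) (Fin N) ℝ).PosDef :=
    fun i => Matrix.PosDef.posSemidef_add (hB i) hone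
  set SA := ∑ i, w i • (A i + μ⁻¹ • 1 : Matrix (Fin N) (Fin N) ℝ)⁻¹ with hSA
  set SB := ∑ i, w i • (B i + μ⁻¹ • 1 : Matrix (Fin N) (Fin N) ℝ)⁻¹ with hSB
  -- SA and SB are positive definite
  have hsumPD : ∀ (C : Fin n → Matrix (Fin N) (Fin N) ℝ),
      (∀ i, (C i).PosDef) → (∑ i, w i • (C i)⁻¹).PosDef := by
    intro C hC
    have hsplit : ∑ i, w i • (C i)⁻¹
        = w j • (C j)⁻¹ + ∑ i ∈ Finset.univ.erase j, w i • (C i)⁻¹ :=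
      (Finset.add_sum_erase _ _ (Finset.mem_univ j)).symm
    rw [hsplit]
    exact (my_smul_posDef (hC j).inv (hw j)).add_posSemidef
      (my_sum_posSemidef _ _ fun i _ => my_smul_posSemidef (hC i).inv.posSemidef (hw i).le)
  have hSApd : SA.PosDef := hsumPD _ hXA
  have hSBpd : SB.PosDef := hsumPD _ hXB
  -- SB - SA is positive definite
  have hdiff : (SB - SA).PosDef := by
    have hsub : SB - SA = ∑ i, w i • ((B i + μ⁻¹ • 1 : Matrix (Fin N) (Fin N) ℝ)⁻¹
        - (A i + μ⁻¹ • 1)⁻¹) := by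
      rw [hSA, hSB, ← Finset.sum_sub_distrib]
      exact Finset.sum_congr rfl fun i _ => (smul_sub _ _ _).symm
    have hterm : ∀ i, ((B i + μ⁻¹ • 1 : Matrix (Fin N) (Fin N) ℝ)⁻¹
        - (A i + μ⁻¹ • 1)⁻¹).PosSemidef := by
      intro i
      refine my_inv_antitone (hXA i) (hXB i) ?_
      have : (A i + μ⁻¹ • 1) - (B i + μ⁻¹ • 1) = A i - B i := by
        abel
      rw [this]; exact hAB i
    have htermj : ((B j + μ⁻¹ • 1 : Matrix (Fin N) (Fin N) ℝ)⁻¹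
        - (A j + μ⁻¹ • 1)⁻¹).PosDef := by
      refine my_inv_strict_antitone (hXA j) (hXB j) ?_
      have : (A j + μ⁻¹ • 1) - (B j + μ⁻¹ • 1) = A j - B j := by
        abel
      rw [this]; exact hj
    rw [hsub, ← Finset.add_sum_erase _ _ (Finset.mem_univ j)]
    exact (my_smul_posDef htermj (hw j)).add_posSemidef
      (my_sum_posSemidef _ _ fun i _ => my_smul_posSemidef (hterm i) (hw i).le)
  -- conclude
  have hfinal : (SA⁻¹ - SB⁻¹).PosDef := my_inv_strict_antitone hSBpd hSApd hdiff
  have : (SA⁻¹ - μ⁻¹ • (1 : Matrix (Fin N) (Fin N) ℝ)) - (SB⁻¹ - μ⁻¹ • 1)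
      = SA⁻¹ - SB⁻¹ := sub_sub_sub_cancel_right _ _ _
  rw [this]
  exact hfinal
end

section
/- If all Aᵢ are positive semidefinite, then the resolvent average R_μ(A,λ) is positive semidefinite; if moreover some A_j is positive definite, then R_μ(A,λ) is positive definite. -/
open Matrix

namespace Matrix.PosSemidef

open scoped MatrixOrder

variable {m : Type*} [Fintype m] [DecidableEq m]

noncomputable def sqrt {A : Matrix m m ℝ} (_hA : A.PosSemidef) : Matrix m m ℝ := CFC.sqrt A

lemma sqrt_mul_self {A : Matrix m m ℝ} (hA : A.PosSemidef) : hA.sqrt * hA.sqrt = A :=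
  CFC.sqrt_mul_sqrt_self A hA.nonneg

lemma posSemidef_sqrt {A : Matrix m m ℝ} (hA : A.PosSemidef) : hA.sqrt.PosSemidef :=
  (CFC.sqrt_nonneg A).posSemidef

end Matrix.PosSemidef

section Aux

variable {m : Type*} [Fintype m] [DecidableEq m]

private lemma psd_smul {c : ℝ} {M : Matrix m m ℝ} (hc : 0 ≤ c) (hM : M.PosSemidef) :
    (c • M).PosSemidef := by
  refine PosSemidef.of_dotProduct_mulVec_nonneg ?_ fun x => ?_
  · show (c • M)ᴴ = c • M
    rw [conjTranspose_smul, star_trivial, hM.1.eq]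
  · rw [smul_mulVec, dotProduct_smul, smul_eq_mul]
    exact mul_nonneg hc (hM.dotProduct_mulVec_nonneg x)

private lemma pd_smul {c : ℝ} {M : Matrix m m ℝ} (hc : 0 < c) (hM : M.PosDef) :
    (c • M).PosDef := by
  refine PosDef.of_dotProduct_mulVec_pos ?_ fun x hx => ?_
  · show (c • M)ᴴ = c • M
    rw [conjTranspose_smul, star_trivial, hM.1.eq]
  · rw [smul_mulVec, dotProduct_smul, smul_eq_mul]
    exact mul_pos hc (hM.dotProduct_mulVec_pos hx)

private lemma psd_sum {ι : Type*} (s : Finset ι) (f : ι → Matrix m m ℝ)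
    (h : ∀ i ∈ s, (f i).PosSemidef) : (∑ i ∈ s, f i).PosSemidef :=
  Finset.sum_induction f _ (fun _ _ ha hb => ha.add hb) .zero h

private lemma conj_psd {M C : Matrix m m ℝ} (hM : M.PosSemidef) (hC : Cᴴ = C) :
    (C * M * C).PosSemidef := by
  have := hM.mul_mul_conjTranspose_same C
  rwa [hC] at this

private lemma conj_pd {M C : Matrix m m ℝ} (hM : M.PosDef) (hC : Cᴴ = C)
    (hCu : IsUnit C) : (C * M * C).PosDef := by
  refine PosDef.of_dotProduct_mulVec_pos ?_ fun x hx => ?_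
  · show (C * M * C)ᴴ = C * M * C
    rw [conjTranspose_mul, conjTranspose_mul, hC, hM.1.eq, Matrix.mul_assoc]
  · have hxC : C *ᵥ x ≠ 0 := by
      intro h
      exact hx ((Matrix.mulVec_injective_iff_isUnit.mpr hCu) (by simpa using h))
    simpa only [star_mulVec, dotProduct_mulVec, vecMul_vecMul, hC] using hM.dotProduct_mulVec_pos hxC

private lemma transfer_psd {B M : Matrix m m ℝ} (hB : B.PosDef)
    (h : (B * M * B).PosSemidef) : M.PosSemidef := by
  have hdet : IsUnit B.det := (Matrix.isUnit_iff_isUnit_det B).mp hB.isUnit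
  have hBi : (B⁻¹)ᴴ = B⁻¹ := hB.inv.1
  have hM : M = B⁻¹ * (B * M * B) * B⁻¹ := by
    rw [Matrix.mul_assoc B M B, ← Matrix.mul_assoc B⁻¹, Matrix.nonsing_inv_mul B hdet,
      Matrix.one_mul, Matrix.mul_assoc M B, Matrix.mul_nonsing_inv B hdet, Matrix.mul_one]
  rw [hM]
  exact conj_psd h hBi

private lemma transfer_pd {B M : Matrix m m ℝ} (hB : B.PosDef)
    (h : (B * M * B).PosDef) : M.PosDef := by
  have hdet : IsUnit B.det := (Matrix.isUnit_iff_isUnit_det B).mp hB.isUnit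
  have hBi : (B⁻¹)ᴴ = B⁻¹ := hB.inv.1
  have hM : M = B⁻¹ * (B * M * B) * B⁻¹ := by
    rw [Matrix.mul_assoc B M B, ← Matrix.mul_assoc B⁻¹, Matrix.nonsing_inv_mul B hdet,
      Matrix.one_mul, Matrix.mul_assoc M B, Matrix.mul_nonsing_inv B hdet, Matrix.mul_one]
  rw [hM]
  exact conj_pd h hBi hB.inv.isUnit

private lemma sqrt_unit {B : Matrix m m ℝ} (hB : B.PosDef) :
    IsUnit hB.posSemidef.sqrt := by
  rw [Matrix.isUnit_iff_isUnit_det, isUnit_iff_ne_zero]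
  intro h
  have := hB.det_pos
  rw [← hB.posSemidef.sqrt_mul_self, Matrix.det_mul, h, mul_zero] at this
  exact lt_irrefl _ this

/-- key identity: `B * (c⁻¹ • 1 - B⁻¹) * B = √B * (c⁻¹ • (B - c • 1)) * √B` -/
private lemma key_identity₁ {B : Matrix m m ℝ} (hB : B.PosDef) {c : ℝ} (hc : c ≠ 0) :
    B * (c⁻¹ • 1 - B⁻¹) * B = hB.posSemidef.sqrt * (c⁻¹ • (B - c • 1)) * hB.posSemidef.sqrt := by
  set s := hB.posSemidef.sqrt with hs_def
  have hs : s * s = B := hB.posSemidef.sqrt_mul_self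
  have hcomm : s * B = B * s := by rw [← hs, ← Matrix.mul_assoc]
  have hdet : IsUnit B.det := (Matrix.isUnit_iff_isUnit_det B).mp hB.isUnit
  have h1 : B * (c⁻¹ • 1 - B⁻¹) * B = c⁻¹ • (B * B) - B := by
    rw [Matrix.mul_sub, Matrix.sub_mul, Matrix.mul_nonsing_inv B hdet, Matrix.one_mul,
      mul_smul_comm, Matrix.mul_one, smul_mul_assoc]
  have h2 : c⁻¹ • (B - c • 1) = c⁻¹ • B - 1 := by
    rw [smul_sub, smul_smul, inv_mul_cancel₀ hc, one_smul]
  rw [h1, h2]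
  simp only [Matrix.mul_sub, Matrix.sub_mul, mul_smul_comm, smul_mul_assoc, Matrix.mul_one,
    ← Matrix.mul_assoc]
  rw [hcomm, Matrix.mul_assoc B s s, hs]

/-- key identity: `S * (S⁻¹ - c⁻¹ • 1) * S = √S * (c⁻¹ • (c • 1 - S)) * √S` -/
private lemma key_identity₂ {S : Matrix m m ℝ} (hS : S.PosDef) {c : ℝ} (hc : c ≠ 0) :
    S * (S⁻¹ - c⁻¹ • 1) * S = hS.posSemidef.sqrt * (c⁻¹ • (c • 1 - S)) * hS.posSemidef.sqrt := by
  have := key_identity₁ hS hc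
  have hneg : S * (S⁻¹ - c⁻¹ • 1) * S = -(S * (c⁻¹ • 1 - S⁻¹) * S) := by
    rw [← Matrix.neg_mul, ← Matrix.mul_neg, neg_sub]
  have hneg2 : (c⁻¹ • (c • 1 - S) : Matrix m m ℝ) = -(c⁻¹ • (S - c • 1)) := by
    rw [← smul_neg, neg_sub]
  rw [hneg, this, hneg2, Matrix.mul_neg, Matrix.neg_mul]

/-- If `B` is positive definite and `B - c • 1` is PSD with `c > 0`,
then `c⁻¹ • 1 - B⁻¹` is PSD. -/
private lemma inv_upper {B : Matrix m m ℝ} (hB : B.PosDef) {c : ℝ} (hc : 0 < c)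
    (h : (B - c • 1).PosSemidef) : ((c⁻¹ • 1 : Matrix m m ℝ) - B⁻¹).PosSemidef := by
  apply transfer_psd hB
  rw [key_identity₁ hB hc.ne']
  exact conj_psd (psd_smul (inv_nonneg.mpr hc.le) h) hB.posSemidef.posSemidef_sqrt.1

private lemma inv_upper_pd {B : Matrix m m ℝ} (hB : B.PosDef) {c : ℝ} (hc : 0 < c)
    (h : (B - c • 1).PosDef) : ((c⁻¹ • 1 : Matrix m m ℝ) - B⁻¹).PosDef := by
  apply transfer_pd hB
  rw [key_identity₁ hB hc.ne']
  exact conj_pd (pd_smul (inv_pos.mpr hc) h) hB.posSemidef.posSemidef_sqrt.1 (sqrt_unit hB)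

/-- If `S` is positive definite and `c • 1 - S` is PSD with `c > 0`,
then `S⁻¹ - c⁻¹ • 1` is PSD. -/
private lemma inv_lower {S : Matrix m m ℝ} (hS : S.PosDef) {c : ℝ} (hc : 0 < c)
    (h : ((c • 1 : Matrix m m ℝ) - S).PosSemidef) :
    (S⁻¹ - c⁻¹ • (1 : Matrix m m ℝ)).PosSemidef := by
  apply transfer_psd hS
  rw [key_identity₂ hS hc.ne']
  exact conj_psd (psd_smul (inv_nonneg.mpr hc.le) h) hS.posSemidef.posSemidef_sqrt.1

private lemma inv_lower_pd {S : Matrix m m ℝ} (hS : S.PosDef) {c : ℝ} (hc : 0 < c)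
    (h : ((c • 1 : Matrix m m ℝ) - S).PosDef) :
    (S⁻¹ - c⁻¹ • (1 : Matrix m m ℝ)).PosDef := by
  apply transfer_pd hS
  rw [key_identity₂ hS hc.ne']
  exact conj_pd (pd_smul (inv_pos.mpr hc) h) hS.posSemidef.posSemidef_sqrt.1 (sqrt_unit hS)

end Aux

theorem resolvent_average_posSemidef (N n : ℕ)
    (A : Fin n → Matrix (Fin N) (Fin N) ℝ) (w : Fin n → ℝ) (μ : ℝ)
    (hA : ∀ i, (A i).PosSemidef)
    (hw : ∀ i, 0 < w i) (hw1 : ∑ i, w i = 1) (hμ : 0 < μ) :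
    ((∑ i, w i • (A i + μ⁻¹ • 1)⁻¹)⁻¹ - μ⁻¹ • (1 : Matrix (Fin N) (Fin N) ℝ)).PosSemidef
    ∧ ((∃ j, (A j).PosDef) →
      ((∑ i, w i • (A i + μ⁻¹ • 1)⁻¹)⁻¹ - μ⁻¹ • (1 : Matrix (Fin N) (Fin N) ℝ)).PosDef) := by
  have hn : n ≠ 0 := by rintro rfl; simp at hw1
  have hne : Nonempty (Fin n) := Fin.pos_iff_nonempty.mp (Nat.pos_of_ne_zero hn)
  set B : Fin n → Matrix (Fin N) (Fin N) ℝ := fun i => A i + μ⁻¹ • 1 with hB_def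
  have hμinv : (0 : ℝ) < μ⁻¹ := inv_pos.mpr hμ
  have hB : ∀ i, (B i).PosDef := fun i =>
    Matrix.PosDef.posSemidef_add (hA i) (pd_smul hμinv Matrix.PosDef.one)
  have hBinv : ∀ i, (B i)⁻¹.PosDef := fun i => (hB i).inv
  -- each summand PD
  have hterm : ∀ i, (w i • (B i)⁻¹).PosDef := fun i => pd_smul (hw i) (hBinv i)
  set S : Matrix (Fin N) (Fin N) ℝ := ∑ i, w i • (B i)⁻¹ with hS_def
  -- S is positive definite
  have hS : S.PosDef := by
    obtain ⟨i₀⟩ := hne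
    have : S = w i₀ • (B i₀)⁻¹ + ∑ i ∈ Finset.univ.erase i₀, w i • (B i)⁻¹ :=
      (Finset.add_sum_erase _ _ (Finset.mem_univ i₀)).symm
    rw [this]
    exact (hterm i₀).add_posSemidef
      (psd_sum _ _ fun i _ => (hterm i).posSemidef)
  -- each `μ • 1 - (B i)⁻¹` is PSD
  have hub : ∀ i, ((μ • 1 : Matrix (Fin N) (Fin N) ℝ) - (B i)⁻¹).PosSemidef := by
    intro i
    have h1 : (B i - μ⁻¹ • 1).PosSemidef := by
      have : B i - μ⁻¹ • 1 = A i := by rw [hB_def]; exact add_sub_cancel_right _ _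
      rw [this]; exact hA i
    have := inv_upper (hB i) hμinv h1
    rwa [inv_inv] at this
  -- μ • 1 - S is PSD
  have hsum_eq : (μ • 1 : Matrix (Fin N) (Fin N) ℝ) - S
      = ∑ i, w i • ((μ • 1 : Matrix (Fin N) (Fin N) ℝ) - (B i)⁻¹) := by
    have h1 : (μ • 1 : Matrix (Fin N) (Fin N) ℝ) = ∑ i, w i • (μ • 1 : Matrix (Fin N) (Fin N) ℝ) := by
      rw [← Finset.sum_smul, hw1, one_smul]
    calc (μ • 1 : Matrix (Fin N) (Fin N) ℝ) - S
        = (∑ i, w i • (μ • 1 : Matrix (Fin N) (Fin N) ℝ)) - ∑ i, w i • (B i)⁻¹ := by rw [← h1]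
      _ = ∑ i, (w i • (μ • 1 : Matrix (Fin N) (Fin N) ℝ) - w i • (B i)⁻¹) := by
          rw [Finset.sum_sub_distrib]
      _ = ∑ i, w i • ((μ • 1 : Matrix (Fin N) (Fin N) ℝ) - (B i)⁻¹) := by
          simp [smul_sub]
  have hSub : ((μ • 1 : Matrix (Fin N) (Fin N) ℝ) - S).PosSemidef := by
    rw [hsum_eq]
    exact psd_sum _ _ fun i _ => psd_smul (hw i).le (hub i)
  constructor
  · exact inv_lower hS hμ hSub
  · rintro ⟨j, hj⟩
    -- strict bound for index j
    have hubj : ((μ • 1 : Matrix (Fin N) (Fin N) ℝ) - (B j)⁻¹).PosDef := by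
      have h1 : (B j - μ⁻¹ • 1).PosDef := by
        have : B j - μ⁻¹ • 1 = A j := by rw [hB_def]; exact add_sub_cancel_right _ _
        rw [this]; exact hj
      have := inv_upper_pd (hB j) hμinv h1
      rwa [inv_inv] at this
    have hSubPD : ((μ • 1 : Matrix (Fin N) (Fin N) ℝ) - S).PosDef := by
      rw [hsum_eq, ← Finset.add_sum_erase _ _ (Finset.mem_univ j)]
      exact (pd_smul (hw j) hubj).add_posSemidef
        (psd_sum _ _ fun i _ => psd_smul (hw i).le (hub i))
    exact inv_lower_pd hS hμ hSubPD
end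

section
/- The matrix inverse is matrix convex on positive definite matrices: for A, B positive definite and t ∈ [0,1], (tA + (1−t)B)⁻¹ ⪯ tA⁻¹ + (1−t)B⁻¹. -/
open Matrix

lemma posSemidef_smul' {N : ℕ} {M : Matrix (Fin N) (Fin N) ℝ} (hM : M.PosSemidef)
    {t : ℝ} (ht : 0 ≤ t) : (t • M).PosSemidef := by
  refine ⟨?_, fun x => ?_⟩
  · show (t • M)ᴴ = t • M
    rw [conjTranspose_smul, hM.isHermitian.eq]
    simp
  · exact (hM.smul ht).2 x

lemma posDef_smul' {N : ℕ} {M : Matrix (Fin N) (Fin N) ℝ} (hM : M.PosDef)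
    {t : ℝ} (ht : 0 < t) : (t • M).PosDef := by
  refine ⟨?_, fun x hx => ?_⟩
  · show (t • M)ᴴ = t • M
    rw [conjTranspose_smul, hM.isHermitian.eq]
    simp
  · exact (hM.smul ht).2 hx

/-- key: X⁻¹ + T X T - 2 T is PSD for X posdef, T symmetric -/
lemma key_psd {N : ℕ} {X T : Matrix (Fin N) (Fin N) ℝ} (hX : X.PosDef)
    (hT : Tᴴ = T) : (X⁻¹ + T * X * T - 2 • T).PosSemidef := by
  have h1 : (T - X⁻¹)ᴴ = T - X⁻¹ := by
    rw [conjTranspose_sub, hT, (hX.posSemidef.isHermitian.inv : X⁻¹ᴴ = X⁻¹)]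
  have h2 := hX.posSemidef.conjTranspose_mul_mul_same (T - X⁻¹)
  rw [h1] at h2
  have hdet : IsUnit X.det := hX.det_pos.ne'.isUnit
  have hinv' : X * X⁻¹ = 1 := mul_nonsing_inv X hdet
  have hinv2 : ∀ (M : Matrix (Fin N) (Fin N) ℝ), X⁻¹ * (X * M) = M := fun M => by
    rw [← Matrix.mul_assoc, nonsing_inv_mul X hdet, Matrix.one_mul]
  have key_eq : (T - X⁻¹) * X * (T - X⁻¹) = X⁻¹ + T * X * T - 2 • T := by
    simp only [sub_mul, mul_sub, Matrix.mul_assoc, hinv2, hinv', Matrix.mul_one, two_smul]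
    abel
  rwa [key_eq] at h2

theorem matrix_inv_convex (N : ℕ) (A B : Matrix (Fin N) (Fin N) ℝ)
    (hA : A.PosDef) (hB : B.PosDef) (t : ℝ) (ht0 : 0 ≤ t) (ht1 : t ≤ 1) :
    ((t • A⁻¹ + (1 - t) • B⁻¹) - (t • A + (1 - t) • B)⁻¹).PosSemidef := by
  set C : Matrix (Fin N) (Fin N) ℝ := t • A + (1 - t) • B with hCdef
  have hC : C.PosDef := by
    rcases eq_or_lt_of_le ht1 with h1 | h1
    · subst h1
      have : C = A := by simp [hCdef]
      rwa [this]
    · have hB' : ((1 - t) • B).PosDef := posDef_smul' hB (by linarith)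
      have hA' : (t • A).PosSemidef := posSemidef_smul' hA.posSemidef ht0
      exact Matrix.PosDef.posSemidef_add hA' hB'
  have hCH : C⁻¹ᴴ = C⁻¹ := hC.posSemidef.isHermitian.inv
  have hEA := key_psd hA hCH
  have hEB := key_psd hB hCH
  have hD := (posSemidef_smul' hEA ht0).add (posSemidef_smul' hEB (by linarith : (0:ℝ) ≤ 1 - t))
  have hinv : C⁻¹ * C = 1 := nonsing_inv_mul C hC.det_pos.ne'.isUnit
  have expand : t • (C⁻¹ * A * C⁻¹) + (1 - t) • (C⁻¹ * B * C⁻¹) = C⁻¹ := by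
    calc t • (C⁻¹ * A * C⁻¹) + (1 - t) • (C⁻¹ * B * C⁻¹)
        = C⁻¹ * (t • A + (1 - t) • B) * C⁻¹ := by
          rw [Matrix.mul_add, Matrix.add_mul, Matrix.mul_smul, Matrix.mul_smul,
            Matrix.smul_mul, Matrix.smul_mul]
      _ = C⁻¹ := by rw [← hCdef, hinv, Matrix.one_mul]
  have hid : t • (A⁻¹ + C⁻¹ * A * C⁻¹ - 2 • C⁻¹) + (1 - t) • (B⁻¹ + C⁻¹ * B * C⁻¹ - 2 • C⁻¹)
      = (t • A⁻¹ + (1 - t) • B⁻¹) - C⁻¹ := by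
    calc t • (A⁻¹ + C⁻¹ * A * C⁻¹ - 2 • C⁻¹) + (1 - t) • (B⁻¹ + C⁻¹ * B * C⁻¹ - 2 • C⁻¹)
        = (t • A⁻¹ + (1 - t) • B⁻¹)
            + (t • (C⁻¹ * A * C⁻¹) + (1 - t) • (C⁻¹ * B * C⁻¹)) - 2 • C⁻¹ := by
          simp only [two_smul]
          module
      _ = (t • A⁻¹ + (1 - t) • B⁻¹) - C⁻¹ := by
          rw [expand]
          simp only [two_smul]
          abel
  rw [← hid]
  exact hD
end
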